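/- If every graph with no K_t-minor is f(t)-colorable, then every signed graph with no negative loop and with no K̃_t-minor admits a balanced f(t)-coloring. Equivalently, M(t) = SM(t) for all t, where M(t) is the largest k such that every graph of chromatic number at least t has a K_k-minor, and SM(t) is the largest k such that every signed graph with no negative loop and balanced chromatic number at least t has a K̃_k-minor. -/

import Mathlib

/-- A signed (multi)graph: an edge set with endpoints (an unordered pair,
possibly a loop) and a sign for each edge (`neg e = true` means `e` is negative). -/
structure SGraph (V : Type) where
  E : Type
  ends : E → Sym2 V
  neg : E → Bool

namespace SGraph

variable {V W : Type}

/-- Walks in a signed multigraph, recorded as sequences of edges. -/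
inductive Walk (G : SGraph V) : V → V → Type where
  | nil {v : V} : Walk G v v
  | cons {u v w : V} (e : G.E) (h : G.ends e = s(u, v)) (p : Walk G v w) : Walk G u w

namespace Walk

variable {G : SGraph V}

/-- The list of edges of a walk. -/
def edges : {u v : V} → G.Walk u v → List G.E
  | _, _, .nil => []
  | _, _, .cons e _ p => e :: p.edges

/-- The list of vertices visited by a walk (in order, with repetitions). -/
def support : {u v : V} → G.Walk u v → List V
  | u, _, .nil => [u]
  | u, _, .cons _ _ p => u :: p.support

/-- A walk is negative if it uses an odd number of negative edges
(its sign, the product of the signs of its edges with multiplicity, is `-1`). -/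
def isNeg {u v : V} (p : G.Walk u v) : Bool :=
  (p.edges.map G.neg).foldr Bool.xor false

/-- A closed walk is a cycle if it has at least one edge, no repeated edge,
and no repeated vertex (except the initial vertex which is also final). -/
def IsCycle {v : V} (p : G.Walk v v) : Prop :=
  p.edges ≠ [] ∧ p.edges.Nodup ∧ p.support.tail.Nodup

/-- The internal vertices of a walk. -/
def inner {u v : V} (p : G.Walk u v) : List V :=
  p.support.tail.dropLast

end Walk

/-- A set of vertices is balanced if it induces no negative cycle. -/
def BalancedSet (G : SGraph V) (X : Set V) : Prop :=
  ∀ (v : V) (p : G.Walk v v), p.IsCycle → (∀ u ∈ p.support, u ∈ X) → p.isNeg = false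

/-- A signed graph is balanced if it contains no negative cycle. -/
def IsBalanced (G : SGraph V) : Prop := G.BalancedSet Set.univ

/-- The signed graph has a negative loop. -/
def HasNegLoop (G : SGraph V) : Prop :=
  ∃ e : G.E, (∃ v : V, G.ends e = s(v, v)) ∧ G.neg e = true

/-- The signed graph has a positive loop. -/
def HasPosLoop (G : SGraph V) : Prop :=
  ∃ e : G.E, (∃ v : V, G.ends e = s(v, v)) ∧ G.neg e = false

/-- A balanced `k`-coloring: a partition of the vertices into `k` balanced color classes. -/
def ColorableB (G : SGraph V) (k : ℕ) : Prop :=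
  ∃ c : V → Fin k, ∀ i : Fin k, G.BalancedSet {v | c v = i}

/-- The balanced chromatic number. -/
noncomputable def chromNumB (G : SGraph V) : ℕ∞ :=
  ⨅ n ∈ {n : ℕ | G.ColorableB n}, (n : ℕ∞)

/-- Switching at the set of vertices where `s` is `true`: the sign of an edge is
multiplied by `-1` once for each of its endpoints (with multiplicity) in the set;
thus an edge with exactly one endpoint in the set changes sign, and loops are unchanged. -/
def switch (G : SGraph V) (s : V → Bool) : SGraph V where
  E := G.E
  ends := G.ends
  neg e := Bool.xor (G.neg e)
    (Sym2.lift ⟨fun u v => Bool.xor (s u) (s v), fun u v => Bool.xor_comm _ _⟩ (G.ends e))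

/-- The negation of a signature. -/
def negate (G : SGraph V) : SGraph V where
  E := G.E
  ends := G.ends
  neg e := !(G.neg e)

/-- A set of vertices is connected via positive edges inside itself. -/
def PosConnected (G : SGraph V) (B : Set V) : Prop :=
  B.Nonempty ∧ ∀ u ∈ B, ∀ v ∈ B, ∃ p : G.Walk u v,
    (∀ x ∈ p.support, x ∈ B) ∧ ∀ e ∈ p.edges, G.neg e = false

/-- `H` is a minor of `G`: after a suitable switching of `G`, there are disjoint
branch sets (each connected via positive edges) for the vertices of `H`, and
distinct edges of `G`, with the correct signs, realizing the edges of `H`. -/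
def IsMinor (H : SGraph W) (G : SGraph V) : Prop :=
  ∃ s : V → Bool, ∃ B : W → Set V,
    (∀ x : W, (G.switch s).PosConnected (B x)) ∧
    (Pairwise fun x y => Disjoint (B x) (B y)) ∧
    ∃ η : H.E → G.E, Function.Injective η ∧
      ∀ (e : H.E) (x y : W), H.ends e = s(x, y) →
        (G.switch s).neg (η e) = H.neg e ∧
        ∃ u v : V, G.ends (η e) = s(u, v) ∧ u ∈ B x ∧ v ∈ B y

/-- A homomorphism of signed graphs: after a suitable switching of the source,
a map of vertices and edges preserving incidences and signs. -/
def HomTo (G : SGraph V) (H : SGraph W) : Prop :=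
  ∃ s : V → Bool, ∃ f : V → W, ∃ g : G.E → H.E,
    ∀ (e : G.E) (u v : V), G.ends e = s(u, v) →
      H.ends (g e) = s(f u, f v) ∧ H.neg (g e) = (G.switch s).neg e

/-- A subdivision of `H` is isomorphic to a subgraph of `G` (signs ignored):
an injection of the vertices of `H` together with internally disjoint,
edge-disjoint paths of `G` realizing the edges of `H`. -/
def IsSubdivisionOf (H : SGraph W) (G : SGraph V) : Prop :=
  ∃ (φ : W → V) (ep : H.E → W × W),
    Function.Injective φ ∧
    (∀ e : H.E, H.ends e = s((ep e).1, (ep e).2)) ∧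
    ∃ P : (e : H.E) → G.Walk (φ (ep e).1) (φ (ep e).2),
      (∀ e, (P e).support.Nodup) ∧
      (∀ e f, e ≠ f → ∀ x ∈ (P e).inner, x ∉ (P f).support) ∧
      (∀ e, ∀ x ∈ (P e).inner, x ∉ Set.range φ) ∧
      (∀ e f, e ≠ f → ∀ g ∈ (P e).edges, g ∉ (P f).edges)

/-- `H` is a total topological minor of `G`: a subdivision of `H` occurs as a
subgraph of `G` in which the path representing each edge `e` of `H` has sign
exactly the sign of `e`. -/
def IsTotalTopMinor (H : SGraph W) (G : SGraph V) : Prop :=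
  ∃ (φ : W → V) (ep : H.E → W × W),
    Function.Injective φ ∧
    (∀ e : H.E, H.ends e = s((ep e).1, (ep e).2)) ∧
    ∃ P : (e : H.E) → G.Walk (φ (ep e).1) (φ (ep e).2),
      (∀ e, (P e).support.Nodup) ∧
      (∀ e f, e ≠ f → ∀ x ∈ (P e).inner, x ∉ (P f).support) ∧
      (∀ e, ∀ x ∈ (P e).inner, x ∉ Set.range φ) ∧
      (∀ e f, e ≠ f → ∀ g ∈ (P e).edges, g ∉ (P f).edges) ∧
      (∀ e, (P e).isNeg = H.neg e)

/-- `H` is a topological minor of `G`: some subdivision of `H` occurs as a subgraph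
of `G` in which every cycle of `H` keeps its sign; equivalently, after a suitable
switching of `H`, `H` is a total topological minor of `G`. -/
def IsTopMinor (H : SGraph W) (G : SGraph V) : Prop :=
  ∃ s : W → Bool, (H.switch s).IsTotalTopMinor G

end SGraph

open SGraph

/-- The signed graph `G̃` obtained from a graph `G` by replacing each edge by a
pair of parallel edges, one positive and one negative. -/
def SimpleGraph.tildeS {V : Type} (G : SimpleGraph V) : SGraph V where
  E := G.edgeSet × Bool
  ends e := (e.1 : Sym2 V)
  neg e := e.2

/-- The all-negative signed graph `(G, -)` on a graph `G`. -/
def SimpleGraph.allNeg {V : Type} (G : SimpleGraph V) : SGraph V where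
  E := G.edgeSet
  ends e := (e : Sym2 V)
  neg _ := true

/-- `K̃_k`: the signed graph on `k` vertices with a positive and a negative edge
between each pair of distinct vertices. -/
def tildeK (k : ℕ) : SGraph (Fin k) := (⊤ : SimpleGraph (Fin k)).tildeS

/-- `(K_k, -)`: the all-negative complete signed graph on `k` vertices. -/
def allNegK (k : ℕ) : SGraph (Fin k) := (⊤ : SimpleGraph (Fin k)).allNeg

/-- `K̃_k⁺`: as `K̃_k`, with in addition a positive loop at every vertex. -/
def tildeKplus (k : ℕ) : SGraph (Fin k) where
  E := ((⊤ : SimpleGraph (Fin k)).edgeSet × Bool) ⊕ Fin k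
  ends := Sum.elim (fun e => (e.1 : Sym2 (Fin k))) (fun i => s(i, i))
  neg := Sum.elim (fun e => e.2) (fun _ => false)

/-- `G` has a `K_k`-minor: `k` disjoint connected branch sets, pairwise joined by an edge. -/
def SimpleGraph.HasCliqueMinor {V : Type} (G : SimpleGraph V) (k : ℕ) : Prop :=
  ∃ T : Fin k → G.Subgraph,
    (∀ i, (T i).coe.Connected) ∧
    (Pairwise fun i j => Disjoint (T i).verts (T j).verts) ∧
    ∀ i j, i ≠ j → ∃ u v, G.Adj u v ∧ u ∈ (T i).verts ∧ v ∈ (T j).verts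

/-- `G` has an odd-`K_k`-minor: a 2-coloring of the vertices together with `k`
disjoint trees, all of whose edges are properly colored, pairwise joined by a
monochromatic edge. -/
def SimpleGraph.HasOddCliqueMinor {V : Type} (G : SimpleGraph V) (k : ℕ) : Prop :=
  ∃ c : V → Bool, ∃ T : Fin k → G.Subgraph,
    (∀ i, (T i).coe.IsTree) ∧
    (Pairwise fun i j => Disjoint (T i).verts (T j).verts) ∧
    (∀ i, ∀ u v, (T i).Adj u v → c u ≠ c v) ∧
    ∀ i j, i ≠ j →
      ∃ u v, G.Adj u v ∧ u ∈ (T i).verts ∧ v ∈ (T j).verts ∧ c u = c v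

/-- `G` has an even-odd-`K_k`-minor: as an odd-`K_k`-minor, with in addition a
properly colored edge between each pair of distinct trees. -/
def SimpleGraph.HasEvenOddCliqueMinor {V : Type} (G : SimpleGraph V) (k : ℕ) : Prop :=
  ∃ c : V → Bool, ∃ T : Fin k → G.Subgraph,
    (∀ i, (T i).coe.IsTree) ∧
    (Pairwise fun i j => Disjoint (T i).verts (T j).verts) ∧
    (∀ i, ∀ u v, (T i).Adj u v → c u ≠ c v) ∧
    ∀ i j, i ≠ j →
      (∃ u v, G.Adj u v ∧ u ∈ (T i).verts ∧ v ∈ (T j).verts ∧ c u = c v) ∧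
      (∃ u v, G.Adj u v ∧ u ∈ (T i).verts ∧ v ∈ (T j).verts ∧ c u ≠ c v)

/-- The fractional chromatic number of a finite graph: the infimum total weight of
a system of nonnegative weights on independent sets covering every vertex with
total weight at least 1. -/
noncomputable def SimpleGraph.fracChrom {V : Type} [Fintype V] [DecidableEq V]
    (G : SimpleGraph V) : ℝ :=
  sInf {r : ℝ | ∃ w : Finset V → ℝ, (∀ A, 0 ≤ w A) ∧
    (∀ A : Finset V, w A ≠ 0 → (∀ u ∈ A, ∀ v ∈ A, ¬G.Adj u v)) ∧
    (∀ v : V, 1 ≤ ∑ A : Finset V, if v ∈ A then w A else 0) ∧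
    ∑ A : Finset V, w A ≤ r}

/-- The fractional balanced chromatic number of a finite signed graph: the infimum
total weight of a system of nonnegative weights on balanced sets covering every
vertex with total weight at least 1. -/
noncomputable def SGraph.fracChromB {V : Type} [Fintype V] [DecidableEq V]
    (G : SGraph V) : ℝ :=
  sInf {r : ℝ | ∃ w : Finset V → ℝ, (∀ A, 0 ≤ w A) ∧
    (∀ A : Finset V, w A ≠ 0 → G.BalancedSet ↑A) ∧
    (∀ v : V, 1 ≤ ∑ A : Finset V, if v ∈ A then w A else 0) ∧
    ∑ A : Finset V, w A ≤ r}

/-- `M(t)`: the largest `k` such that every graph of chromatic number at least `t`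
has a `K_k`-minor. -/
noncomputable def M (t : ℕ) : ℕ :=
  sSup {k : ℕ | ∀ (m : ℕ) (G : SimpleGraph (Fin m)),
    (t : ℕ∞) ≤ G.chromaticNumber → G.HasCliqueMinor k}

/-- `SM(t)`: the largest `k` such that every signed graph with no negative loop and
balanced chromatic number at least `t` has a `K̃_k`-minor. -/
noncomputable def SM (t : ℕ) : ℕ :=
  sSup {k : ℕ | ∀ (m : ℕ) (G : SGraph (Fin m)),
    ¬ G.HasNegLoop → (t : ℕ∞) ≤ G.chromNumB → (tildeK k).IsMinor G}

set_option linter.unusedVariables false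
set_option maxHeartbeats 1000000

namespace SGraph
namespace Walk

variable {V : Type} {G : SGraph V}

def append : {u v w : V} → G.Walk u v → G.Walk v w → G.Walk u w
  | _, _, _, .nil, q => q
  | _, _, _, .cons e h p, q => .cons e h (p.append q)

@[simp] lemma nil_append {v w : V} (q : G.Walk v w) : Walk.append .nil q = q := rfl
@[simp] lemma cons_append {u a v w : V} (e : G.E) (h : G.ends e = s(u, a))
    (p : G.Walk a v) (q : G.Walk v w) :
    Walk.append (.cons e h p) q = .cons e h (p.append q) := rfl

@[simp] lemma edges_append {u v w : V} (p : G.Walk u v) (q : G.Walk v w) :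
    (p.append q).edges = p.edges ++ q.edges := by
  induction p with
  | nil => rfl
  | cons e h p ih => simp [append, edges, ih]

lemma start_mem_support {u v : V} (p : G.Walk u v) : u ∈ p.support := by
  cases p <;> simp [support]

lemma mem_support_append {u v w : V} (p : G.Walk u v) (q : G.Walk v w) (x : V) :
    x ∈ (p.append q).support ↔ x ∈ p.support ∨ x ∈ q.support := by
  induction p with
  | nil =>
    simp only [nil_append, support, List.mem_singleton]
    constructor
    · exact fun h => Or.inr h
    · rintro (rfl | h)
      · exact start_mem_support q
      · exact h
  | cons e h p ih =>
    simp only [cons_append, support, List.mem_cons, ih]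
    tauto

def negList (G : SGraph V) (l : List G.E) : Bool := (l.map G.neg).foldr Bool.xor false

lemma isNeg_eq_negList {u v : V} (p : G.Walk u v) : p.isNeg = negList G p.edges := rfl

@[simp] lemma negList_nil : negList G [] = false := rfl
@[simp] lemma negList_cons (e : G.E) (l : List G.E) :
    negList G (e :: l) = Bool.xor (G.neg e) (negList G l) := rfl

lemma negList_append (l₁ l₂ : List G.E) :
    negList G (l₁ ++ l₂) = Bool.xor (negList G l₁) (negList G l₂) := by
  induction l₁ with
  | nil => simp
  | cons e l ih => simp [ih, Bool.xor_assoc]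

lemma negList_eq_false (l : List G.E) (h : ∀ e ∈ l, G.neg e = false) :
    negList G l = false := by
  induction l with
  | nil => rfl
  | cons e l ih => simp_all

lemma isNeg_append {u v w : V} (p : G.Walk u v) (q : G.Walk v w) :
    (p.append q).isNeg = Bool.xor p.isNeg q.isNeg := by
  simp [isNeg_eq_negList, negList_append]

@[simp] lemma isNeg_cons {u a w : V} (e : G.E) (h : G.ends e = s(u, a)) (p : G.Walk a w) :
    (Walk.cons e h p).isNeg = Bool.xor (G.neg e) p.isNeg := rfl

def reverse : {u v : V} → G.Walk u v → G.Walk v u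
  | _, _, .nil => .nil
  | _, _, .cons e h p => p.reverse.append (.cons e (by rw [h, Sym2.eq_swap]) .nil)

lemma edges_reverse {u v : V} (p : G.Walk u v) : ∀ e, e ∈ p.reverse.edges ↔ e ∈ p.edges := by
  induction p with
  | nil => intro e; rfl
  | cons e h p ih =>
    intro f
    simp [reverse, edges, List.mem_append, ih f]
    tauto

lemma mem_support_reverse {u v : V} (p : G.Walk u v) (x : V) :
    x ∈ p.reverse.support ↔ x ∈ p.support := by
  induction p with
  | nil => rfl
  | cons e h p ih =>
    have hs := start_mem_support p
    simp only [reverse, mem_support_append, ih, support, List.mem_cons,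
      List.not_mem_nil, or_false, List.mem_singleton]
    constructor
    · rintro (h | rfl | rfl)
      · exact Or.inr h
      · exact Or.inr hs
      · exact Or.inl rfl
    · rintro (rfl | h)
      · exact Or.inr (Or.inr rfl)
      · exact Or.inl h

@[simp] lemma isNeg_nil {v : V} : (Walk.nil : G.Walk v v).isNeg = false := rfl

lemma isNeg_reverse {u v : V} (p : G.Walk u v) : p.reverse.isNeg = p.isNeg := by
  induction p with
  | nil => rfl
  | cons e h p ih =>
    show (p.reverse.append _).isNeg = _
    rw [isNeg_append, ih, isNeg_cons, isNeg_cons, isNeg_nil, Bool.xor_false, Bool.xor_comm]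

lemma end_mem_support {u v : V} (p : G.Walk u v) : v ∈ p.support := by
  induction p with
  | nil => simp [support]
  | cons e h p ih => simp [support, ih]

lemma support_eq_cons {u v : V} (p : G.Walk u v) : p.support = u :: p.support.tail := by
  cases p <;> rfl

/-- Both endpoints of any edge of a walk lie on its support. -/
lemma ends_mem_support {u v : V} (p : G.Walk u v) (f : G.E) (hf : f ∈ p.edges)
    {a b : V} (hab : G.ends f = s(a, b)) : a ∈ p.support ∧ b ∈ p.support := by
  induction p with
  | nil => simp [edges] at hf
  | cons e h p ih =>
    rcases List.mem_cons.mp hf with rfl | hf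
    · rw [h] at hab
      rcases Sym2.eq_iff.mp hab with ⟨rfl, rfl⟩ | ⟨rfl, rfl⟩
      · exact ⟨start_mem_support _, by simp [support, start_mem_support]⟩
      · exact ⟨by simp [support, start_mem_support], start_mem_support _⟩
    · obtain ⟨h1, h2⟩ := ih hf
      exact ⟨by simp [support, h1], by simp [support, h2]⟩

lemma end_mem_support_tail {u v : V} (p : G.Walk u v) (h : p.edges ≠ []) :
    v ∈ p.support.tail := by
  cases p with
  | nil => simp [edges] at h
  | cons e he q => simpa [support] using end_mem_support q

/-- A closed walk whose support is nodup is nil. -/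
lemma eq_nil_of_support_nodup {v : V} (p : G.Walk v v) (h : p.support.Nodup) : p = .nil := by
  cases p with
  | nil => rfl
  | cons e he q =>
    exfalso
    have hv : v ∈ q.support := end_mem_support q
    have : v ∉ q.support := by
      have := h
      simp [support] at this
      exact this.1
    exact this hv

/-- Walks with nodup support have nodup edges. -/
lemma edges_nodup_of_support_nodup {u v : V} (p : G.Walk u v) :
    p.support.Nodup → p.edges.Nodup := by
  induction p with
  | nil => intro _; simp [edges]
  | cons e he q ih =>
    rename_i a b c
    intro h
    simp only [support, List.nodup_cons] at h
    refine List.nodup_cons.mpr ⟨?_, ih h.2⟩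
    intro hmem
    exact h.1 (ends_mem_support q e hmem he).1

/-- KEY: in a walk with nodup support from `w` to `v`, if an edge with ends `s(v, w)`
occurs, then it is the only edge. -/
lemma edges_eq_of_mem {w v : V} (q : G.Walk w v) : q.support.Nodup →
    ∀ e : G.E, G.ends e = s(v, w) → e ∈ q.edges → q.edges = [e] := by
  induction q with
  | nil => intro _ e _ hmem; simp [edges] at hmem
  | cons e' he' r ih =>
    rename_i a b c
    intro hnd e he hmem
    simp only [support, List.nodup_cons] at hnd
    rcases List.mem_cons.mp hmem with rfl | hmem'
    · -- the first edge is `e` : ends e = s(a, b) = s(c, a)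
      rw [he'] at he
      have hx : b = c := by
        rcases Sym2.eq_iff.mp he with ⟨h1, h2⟩ | ⟨h1, h2⟩
        · exact h2.trans h1
        · exact h2
      subst hx
      rw [show edges (Walk.cons e he' r) = e :: r.edges from rfl,
        eq_nil_of_support_nodup r hnd.2]
      rfl
    · exfalso
      exact hnd.1 (ends_mem_support r e hmem' he).2

end Walk
end SGraph

namespace SGraph
namespace Walk

variable {V : Type} {G : SGraph V}

/-- Splitting a walk at a vertex on its support. -/
lemma split_at [DecidableEq V] : ∀ {u v : V} (p : G.Walk u v) (x : V), x ∈ p.support →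
    ∃ (q : G.Walk u x) (r : G.Walk x v),
      p.edges = q.edges ++ r.edges ∧
      (∀ y ∈ q.support, y ∈ p.support) ∧ (∀ y ∈ r.support, y ∈ p.support) ∧
      List.count x r.support = List.count x p.support := by
  intro u v p
  induction p with
  | nil =>
    intro x h
    simp only [support, List.mem_singleton] at h
    subst h
    exact ⟨.nil, .nil, rfl, fun y hy => hy, fun y hy => hy, rfl⟩
  | cons e he p' ih =>
    rename_i a b c
    intro x h
    by_cases hxa : x = a
    · subst hxa
      exact ⟨.nil, .cons e he p', rfl, fun y hy => by
          simp only [support, List.mem_singleton] at hy; simp [hy, support],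
        fun y hy => hy, rfl⟩
    · have hx' : x ∈ p'.support := by
        simp only [support, List.mem_cons] at h
        tauto
      obtain ⟨q', r', hed, hsq, hsr, hcnt⟩ := ih x hx'
      refine ⟨.cons e he q', r', by simp [edges, hed], ?_, ?_, ?_⟩
      · intro y hy
        simp only [support, List.mem_cons] at hy ⊢
        rcases hy with rfl | hy
        · exact Or.inl rfl
        · exact Or.inr (hsq y hy)
      · intro y hy
        simp only [support, List.mem_cons]
        exact Or.inr (hsr y hy)
      · rw [hcnt]
        simp only [support]
        rw [List.count_cons_of_ne (Ne.symm hxa)]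

theorem exists_neg_cycle_aux [DecidableEq V] :
    ∀ n : ℕ, ∀ {v : V} (p : G.Walk v v), p.edges.length ≤ n → p.isNeg = true →
    ∃ (w : V) (q : G.Walk w w), q.IsCycle ∧ q.isNeg = true ∧ ∀ x ∈ q.support, x ∈ p.support := by
  intro n
  induction n with
  | zero =>
    intro v p hlen hneg
    have : p.edges = [] := List.length_eq_zero_iff.mp (Nat.le_zero.mp hlen)
    rw [isNeg_eq_negList, this] at hneg
    simp at hneg
  | succ n ih =>
    intro v p hlen hneg
    cases p with
    | nil => simp at hneg
    | cons e₁ h₁ q =>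
      rename_i b
      by_cases hnd : q.support.Nodup
      · by_cases hmem : e₁ ∈ q.edges
        · exfalso
          have hq : q.edges = [e₁] := edges_eq_of_mem q hnd e₁ h₁ hmem
          rw [isNeg_eq_negList, show (Walk.cons e₁ h₁ q).edges = e₁ :: q.edges from rfl,
            hq] at hneg
          simp [negList] at hneg
        · refine ⟨v, .cons e₁ h₁ q, ⟨by simp [edges], ?_, ?_⟩, hneg, fun x hx => hx⟩
          · exact List.nodup_cons.mpr ⟨hmem, edges_nodup_of_support_nodup q hnd⟩
          · simpa [support] using hnd
      · -- find a repeated vertex in q.support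
        obtain ⟨x, hx2⟩ : ∃ x, 2 ≤ List.count x q.support := by
          by_contra hc
          push_neg at hc
          exact hnd (List.nodup_iff_count_le_one.mpr fun a => by
            have := hc a; omega)
        have hx : x ∈ q.support := by
          rw [← List.count_pos_iff]
          omega
        obtain ⟨tq, d, hedq, hstq, hsd, hcntd⟩ := split_at q x hx
        cases d with
        | nil =>
          exfalso
          simp only [support, List.count_cons_self, List.count_nil] at hcntd
          omega
        | cons e₂ h₂ r =>
          rename_i y
          have hxr : x ∈ r.support := by
            rw [← List.count_pos_iff]
            have : List.count x (Walk.cons e₂ h₂ r).support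
                = 1 + List.count x r.support := by
              simp [support, List.count_cons_self, Nat.add_comm]
            omega
          obtain ⟨tr, dr, hedr, hstr, hsdr, _⟩ := split_at r x hxr
          set c : G.Walk x x := .cons e₂ h₂ tr with hc
          set o : G.Walk v v := .cons e₁ h₁ (tq.append dr) with ho
          have hpe : (Walk.cons e₁ h₁ q).edges
              = e₁ :: (tq.edges ++ (e₂ :: (tr.edges ++ dr.edges))) := by
            simp [edges, hedq, hedr]
          have hsign : Bool.xor c.isNeg o.isNeg = true := by
            rw [← hneg]
            simp only [isNeg_eq_negList, hc, ho, edges, edges_append, hedq, hedr,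
              negList_cons, negList_append]
            generalize G.neg e₁ = A
            generalize G.neg e₂ = B
            generalize negList G tq.edges = C
            generalize negList G tr.edges = D
            generalize negList G dr.edges = E
            revert A B C D E
            decide
          have hlenc : c.edges.length ≤ n ∧ o.edges.length ≤ n := by
            have h1 : (Walk.cons e₁ h₁ q).edges.length
                = 1 + tq.edges.length + 1 + tr.edges.length + dr.edges.length := by
              rw [hpe]; simp; omega
            have h2 : c.edges.length = 1 + tr.edges.length := by
              simp [hc, edges]; omega
            have h3 : o.edges.length = 1 + tq.edges.length + dr.edges.length := by
              simp [ho, edges]; omega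
            omega
          have hsupc : ∀ z ∈ c.support, z ∈ (Walk.cons e₁ h₁ q).support := by
            intro z hz
            simp only [hc, support, List.mem_cons] at hz
            rcases hz with rfl | hz
            · simp only [support, List.mem_cons]; exact Or.inr hx
            · have : z ∈ r.support := hstr z hz
              have : z ∈ (Walk.cons e₂ h₂ r).support := by
                simp [support, this]
              simp only [support, List.mem_cons]
              exact Or.inr (hsd z this)
          have hsupo : ∀ z ∈ o.support, z ∈ (Walk.cons e₁ h₁ q).support := by
            intro z hz
            simp only [ho, support, List.mem_cons, mem_support_append] at hz
            simp only [support, List.mem_cons]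
            rcases hz with rfl | hz | hz
            · exact Or.inl rfl
            · exact Or.inr (hstq z hz)
            · have : z ∈ r.support := hsdr z hz
              have : z ∈ (Walk.cons e₂ h₂ r).support := by simp [support, this]
              exact Or.inr (hsd z this)
          rcases hcneg : c.isNeg with _ | _
          · -- c positive, so o negative
            have hone : o.isNeg = true := by
              rcases honeg : o.isNeg with _ | _
              · rw [hcneg, honeg] at hsign; simp at hsign
              · rfl
            obtain ⟨w, cyc, h1, h2, h3⟩ := ih o hlenc.2 hone
            exact ⟨w, cyc, h1, h2, fun z hz => hsupo z (h3 z hz)⟩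
          · obtain ⟨w, cyc, h1, h2, h3⟩ := ih c hlenc.1 hcneg
            exact ⟨w, cyc, h1, h2, fun z hz => hsupc z (h3 z hz)⟩

theorem exists_neg_cycle [DecidableEq V] {v : V} (p : G.Walk v v) (hneg : p.isNeg = true) :
    ∃ (w : V) (q : G.Walk w w), q.IsCycle ∧ q.isNeg = true ∧ ∀ x ∈ q.support, x ∈ p.support :=
  exists_neg_cycle_aux p.edges.length p le_rfl hneg

end Walk
end SGraph

namespace SGraph

variable {V : Type} {G : SGraph V}

lemma sym2_exists_eq (z : Sym2 V) : ∃ a b : V, z = s(a, b) := by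
  induction z using Sym2.ind with
  | _ a b => exact ⟨a, b, rfl⟩

lemma switch_neg (s : V → Bool) (e : G.E) {a b : V} (h : G.ends e = s(a, b)) :
    (G.switch s).neg e = Bool.xor (G.neg e) (Bool.xor (s a) (s b)) := by
  simp [switch, h]

namespace Walk

def toSwitch (s : V → Bool) : {u v : V} → G.Walk u v → (G.switch s).Walk u v
  | _, _, .nil => .nil
  | _, _, .cons e h p => .cons e h (toSwitch s p)

@[simp] lemma edges_toSwitch (s : V → Bool) {u v : V} (p : G.Walk u v) :
    (p.toSwitch s).edges = p.edges := by
  induction p with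
  | nil => rfl
  | cons e h p ih => simp [toSwitch, edges, ih]; rfl

@[simp] lemma support_toSwitch (s : V → Bool) {u v : V} (p : G.Walk u v) :
    (p.toSwitch s).support = p.support := by
  induction p with
  | nil => rfl
  | cons e h p ih => simp [toSwitch, support, ih]

lemma isNeg_toSwitch (s : V → Bool) {u v : V} (p : G.Walk u v) :
    (p.toSwitch s).isNeg = Bool.xor p.isNeg (Bool.xor (s u) (s v)) := by
  induction p with
  | nil => simp [toSwitch]
  | cons e h p ih =>
    rename_i a m w
    show Bool.xor ((G.switch s).neg e) (p.toSwitch s).isNeg = _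
    rw [ih, switch_neg s e h, isNeg_cons]
    generalize G.neg e = A
    generalize p.isNeg = B
    generalize s a = C
    generalize s m = D
    generalize s w = E
    revert A B C D E
    decide

end Walk

/-- If, after switching by `s`, every edge inside `X` is positive, then `X` is balanced. -/
lemma balancedSet_of_switch_pos {s : V → Bool} {X : Set V}
    (hpos : ∀ (e : G.E) (a b : V), G.ends e = s(a, b) → a ∈ X → b ∈ X →
      (G.switch s).neg e = false) : G.BalancedSet X := by
  intro v p hcyc hsupp
  have h1 : (p.toSwitch s).isNeg = p.isNeg := by
    rw [Walk.isNeg_toSwitch]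
    simp
  rw [← h1, Walk.isNeg_eq_negList]
  apply Walk.negList_eq_false
  intro e he
  rw [Walk.edges_toSwitch] at he
  obtain ⟨a, b, hab⟩ := sym2_exists_eq (G.ends e)
  obtain ⟨ha, hb⟩ := Walk.ends_mem_support p e he hab
  exact hpos e a b hab (hsupp a ha) (hsupp b hb)

end SGraph

namespace SGraph

variable {V : Type} {G : SGraph V}

namespace Walk

def copyEnd {u v v' : V} (p : G.Walk u v) (h : v = v') : G.Walk u v' := h ▸ p

@[simp] lemma edges_copyEnd {u v v' : V} (p : G.Walk u v) (h : v = v') :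
    (p.copyEnd h).edges = p.edges := by subst h; rfl

@[simp] lemma support_copyEnd {u v v' : V} (p : G.Walk u v) (h : v = v') :
    (p.copyEnd h).support = p.support := by subst h; rfl

@[simp] lemma isNeg_copyEnd {u v v' : V} (p : G.Walk u v) (h : v = v') :
    (p.copyEnd h).isNeg = p.isNeg := by subst h; rfl

end Walk

/-- The data extracted from a coarsest good partition of a signed graph. -/
structure CoreSetup {m : ℕ} (G : SGraph (Fin m)) where
  c : Fin m → Fin m
  rep : Fin m → Fin m
  s0 : Fin m → Bool
  hrep_class : ∀ v, c (rep v) = c v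
  hrep_eq : ∀ v w, c v = c w → rep v = rep w
  conn : ∀ u w, c u = c w → ∃ p : (G.switch s0).Walk u w,
      (∀ x ∈ p.support, c x = c u) ∧ ∀ e ∈ p.edges, (G.switch s0).neg e = false
  intpos : ∀ (e : G.E) (a b : Fin m), G.ends e = s(a, b) → c a = c b →
      (G.switch s0).neg e = false
  bothsigns : ∀ a b : Fin m, c a ≠ c b →
      (∃ e x y, G.ends e = s(x, y) ∧ c x = c a ∧ c y = c b) →
      ∀ σ : Bool, ∃ e x y, G.ends e = s(x, y) ∧ c x = c a ∧ c y = c b ∧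
        (G.switch s0).neg e = σ

theorem exists_coreSetup {m : ℕ} (G : SGraph (Fin m)) (hnl : ¬ G.HasNegLoop) :
    Nonempty (CoreSetup G) := by
  classical
  set Good : (Fin m → Fin m) → Prop := fun c =>
    (∀ v w, c v = c w → ∃ p : G.Walk v w, ∀ x ∈ p.support, c x = c v) ∧
    (∀ l, G.BalancedSet {v | c v = l}) with hGood
  have good_id : Good id := by
    constructor
    · intro v w h
      cases h
      exact ⟨.nil, by intro x hx; simpa [Walk.support] using hx⟩
    · intro l
      apply balancedSet_of_switch_pos (s := fun _ => false)
      intro e a b hab ha hb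
      simp only [Set.mem_setOf_eq, id] at ha hb
      have hab' : G.ends e = s(a, a) := by rw [hab, hb, ← ha]
      have hpos : G.neg e = false := by
        by_contra hc
        exact hnl ⟨e, ⟨a, hab'⟩, by simpa using hc⟩
      rw [switch_neg _ e hab, hpos]
      simp
  set S : Set ℕ := {n | ∃ c, Good c ∧ (Finset.univ.image c).card = n} with hS
  have hSne : S.Nonempty := ⟨_, id, good_id, rfl⟩
  obtain ⟨c, hgood, hcn⟩ : sInf S ∈ S := Nat.sInf_mem hSne
  have hmin : ∀ c', Good c' → sInf S ≤ (Finset.univ.image c').card :=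
    fun c' h => Nat.sInf_le ⟨c', h, rfl⟩
  -- representatives
  have hfibne : ∀ v : Fin m, (Finset.univ.filter (fun w => c w = c v)).Nonempty :=
    fun v => ⟨v, by simp⟩
  set rep : Fin m → Fin m :=
    fun v => (Finset.univ.filter (fun w => c w = c v)).min' (hfibne v) with hrep
  have hrep_class : ∀ v, c (rep v) = c v := by
    intro v
    have := Finset.min'_mem _ (hfibne v)
    simpa using this
  have hrep_eq : ∀ v w, c v = c w → rep v = rep w := by
    intro v w h
    have hset : (Finset.univ.filter (fun x => c x = c v))
        = (Finset.univ.filter (fun x => c x = c w)) := by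
      ext x; simp [h]
    simp only [hrep]
    congr 1
  -- switching
  have hwex : ∀ v, ∃ p : G.Walk (rep v) v, ∀ x ∈ p.support, c x = c v := by
    intro v
    obtain ⟨p, hp⟩ := hgood.1 (rep v) v (hrep_class v)
    exact ⟨p, fun x hx => (hp x hx).trans (hrep_class v)⟩
  choose w_ hw_ using hwex
  set s0 : Fin m → Bool := fun v => (w_ v).isNeg with hs0
  -- internal edges become positive
  have hintpos : ∀ (e : G.E) (a b : Fin m), G.ends e = s(a, b) → c a = c b →
      (G.switch s0).neg e = false := by
    intro e a b hab hcab
    by_contra hc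
    have hne : (G.switch s0).neg e = true := by
      cases h : (G.switch s0).neg e
      · exact absurd h hc
      · rfl
    have hre : rep b = rep a := hrep_eq b a hcab.symm
    set W : G.Walk (rep a) (rep a) :=
      (w_ a).append (.cons e hab (((w_ b).reverse).copyEnd hre)) with hW
    have hWneg : W.isNeg = true := by
      have h1 : W.isNeg = Bool.xor (s0 a) (Bool.xor (G.neg e) (s0 b)) := by
        rw [hW, Walk.isNeg_append, Walk.isNeg_cons, Walk.isNeg_copyEnd,
          Walk.isNeg_reverse]
      have h2 := (switch_neg s0 e hab).symm.trans hne
      rw [h1]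
      revert h2
      generalize G.neg e = A
      generalize s0 a = B
      generalize s0 b = C
      revert A B C
      decide
    have hWsup : ∀ x ∈ W.support, c x = c a := by
      intro x hx
      rw [hW, Walk.mem_support_append] at hx
      rcases hx with hx | hx
      · exact hw_ a x hx
      · simp only [Walk.support, List.mem_cons, Walk.support_copyEnd] at hx
        rcases hx with rfl | hx
        · rfl
        · rw [Walk.mem_support_reverse] at hx
          exact (hw_ b x hx).trans hcab.symm
    obtain ⟨w0, q, hcyc, hqneg, hsub⟩ := Walk.exists_neg_cycle W hWneg
    have := hgood.2 (c a) w0 q hcyc (fun u hu => hWsup u (hsub u hu))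
    rw [hqneg] at this
    exact absurd this (by decide)
  -- both signs occur between adjacent parts
  have hBS : ∀ a b : Fin m, c a ≠ c b →
      (∃ e x y, G.ends e = s(x, y) ∧ c x = c a ∧ c y = c b) →
      ∀ σ : Bool, ∃ e x y, G.ends e = s(x, y) ∧ c x = c a ∧ c y = c b ∧
        (G.switch s0).neg e = σ := by
    intro a b hab hex σ
    obtain ⟨e0, x0, y0, h0, hx0, hy0⟩ := hex
    by_contra hno
    push_neg at hno
    have hall : ∀ (e : G.E) (x y : Fin m), G.ends e = s(x, y) → c x = c a → c y = c b →
        (G.switch s0).neg e = !σ := by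
      intro e x y h1 h2 h3
      have := hno e x y h1 h2 h3
      revert this
      cases σ <;> cases h : (G.switch s0).neg e <;> simp
    set c' : Fin m → Fin m := fun v => if c v = c b then c a else c v with hc'
    set s' : Fin m → Bool :=
      fun v => Bool.xor (s0 v) (if c v = c b then !σ else false) with hs'
    have hfac : ∀ x y, c x = c y → c' x = c' y := by
      intro x y h
      simp only [hc', h]
    have horient : ∀ x y, c' x = c' y → c x ≠ c y →
        (c x = c a ∧ c y = c b) ∨ (c x = c b ∧ c y = c a) := by
      intro x y h1 h2
      simp only [hc'] at h1
      by_cases hxb : c x = c b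
      · rw [if_pos hxb] at h1
        by_cases hyb : c y = c b
        · exact absurd (hxb.trans hyb.symm) h2
        · rw [if_neg hyb] at h1
          exact Or.inr ⟨hxb, h1.symm⟩
      · rw [if_neg hxb] at h1
        by_cases hyb : c y = c b
        · rw [if_pos hyb] at h1
          exact Or.inl ⟨h1, hyb⟩
        · rw [if_neg hyb] at h1
          exact absurd h1 h2
    have hpos' : ∀ (e : G.E) (x y : Fin m), G.ends e = s(x, y) → c' x = c' y →
        (G.switch s').neg e = false := by
      intro e x y hexy hcxy
      have hsw : (G.switch s').neg e = Bool.xor (G.neg e) (Bool.xor (s' x) (s' y)) :=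
        switch_neg _ e hexy
      have hsw0 : (G.switch s0).neg e = Bool.xor (G.neg e) (Bool.xor (s0 x) (s0 y)) :=
        switch_neg _ e hexy
      by_cases h : c x = c y
      · have h0 := (hintpos e x y hexy h).symm.trans hsw0
        rw [hsw]
        simp only [hs']
        simp only [h]
        revert h0
        generalize G.neg e = A
        generalize s0 x = B
        generalize s0 y = C
        generalize (if c y = c b then !σ else false) = D
        revert A B C D
        decide
      · rcases horient x y hcxy h with ⟨hxa, hyb⟩ | ⟨hxb, hya⟩
        · have h0 := (hall e x y hexy hxa hyb).symm.trans hsw0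
          have hxnb : ¬ c x = c b := fun hh => h (hh.trans hyb.symm)
          rw [hsw]
          simp only [hs']
          rw [if_neg hxnb, if_pos hyb]
          revert h0
          generalize G.neg e = A
          generalize s0 x = B
          generalize s0 y = C
          revert A B C
          cases σ <;> decide
        · have hexy' : G.ends e = s(y, x) := by rw [hexy, Sym2.eq_swap]
          have h0 := (hall e y x hexy' hya hxb).symm.trans
            (switch_neg s0 e hexy')
          have hynb : ¬ c y = c b := fun hh => h (hxb.trans hh.symm)
          rw [hsw]
          simp only [hs']
          rw [if_pos hxb, if_neg hynb]
          revert h0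
          generalize G.neg e = A
          generalize s0 x = B
          generalize s0 y = C
          revert A B C
          cases σ <;> decide
    have hgood' : Good c' := by
      constructor
      · intro v w hvw
        have hA : ∀ x, c x = c a → c' x = c a := fun x hx => by
          simp only [hc']
          rw [if_neg (fun hh => hab (hx.symm.trans hh)), hx]
        have hB : ∀ x, c x = c b → c' x = c a := fun x hx => by
          simp only [hc']
          rw [if_pos hx]
        by_cases h : c v = c w
        · obtain ⟨p, hp⟩ := hgood.1 v w h
          exact ⟨p, fun x hx => hfac _ _ (hp x hx)⟩
        · rcases horient v w hvw h with ⟨hva, hwb⟩ | ⟨hvb, hwa⟩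
          · obtain ⟨p1, hp1⟩ := hgood.1 v x0 (hva.trans hx0.symm)
            obtain ⟨p3, hp3⟩ := hgood.1 y0 w (hy0.trans hwb.symm)
            refine ⟨p1.append (.cons e0 h0 p3), ?_⟩
            intro x hx
            rw [Walk.mem_support_append] at hx
            rw [hA v hva]
            rcases hx with hx | hx
            · exact hA x ((hp1 x hx).trans hva)
            · simp only [Walk.support, List.mem_cons] at hx
              rcases hx with rfl | hx
              · exact hA x hx0
              · exact hB x ((hp3 x hx).trans hy0)
          · have h0' : G.ends e0 = s(y0, x0) := by rw [h0, Sym2.eq_swap]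
            obtain ⟨p1, hp1⟩ := hgood.1 v y0 (hvb.trans hy0.symm)
            obtain ⟨p3, hp3⟩ := hgood.1 x0 w (hx0.trans hwa.symm)
            refine ⟨p1.append (.cons e0 h0' p3), ?_⟩
            intro x hx
            rw [Walk.mem_support_append] at hx
            rw [hB v hvb]
            rcases hx with hx | hx
            · exact hB x ((hp1 x hx).trans hvb)
            · simp only [Walk.support, List.mem_cons] at hx
              rcases hx with rfl | hx
              · exact hB x hy0
              · exact hA x ((hp3 x hx).trans hx0)
      · intro l
        apply balancedSet_of_switch_pos (s := s')
        intro e x y hexy hx hy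
        have hx' : c' x = l := hx
        have hy' : c' y = l := hy
        exact hpos' e x y hexy (hx'.trans hy'.symm)
    have hlt : (Finset.univ.image c').card < sInf S := by
      have hbmem : c b ∈ Finset.univ.image c := Finset.mem_image.mpr ⟨b, by simp⟩
      have hsub : Finset.univ.image c' ⊆ (Finset.univ.image c).erase (c b) := by
        intro x hx
        obtain ⟨v, _, hv⟩ := Finset.mem_image.mp hx
        by_cases hvb : c v = c b
        · rw [← hv]
          simp only [hc', if_pos hvb]
          exact Finset.mem_erase.mpr ⟨hab, Finset.mem_image.mpr ⟨a, by simp⟩⟩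
        · rw [← hv]
          simp only [hc', if_neg hvb]
          exact Finset.mem_erase.mpr ⟨hvb, Finset.mem_image.mpr ⟨v, by simp⟩⟩
      have h1 : (Finset.univ.image c').card ≤ ((Finset.univ.image c).erase (c b)).card :=
        Finset.card_le_card hsub
      have h2 : ((Finset.univ.image c).erase (c b)).card
          = (Finset.univ.image c).card - 1 := Finset.card_erase_of_mem hbmem
      have h3 : 0 < (Finset.univ.image c).card :=
        Finset.card_pos.mpr ⟨c b, hbmem⟩
      omega
    exact absurd (hmin c' hgood') (by omega)
  -- assemble
  refine ⟨⟨c, rep, s0, hrep_class, hrep_eq, ?_, hintpos, hBS⟩⟩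
  intro u w hcuw
  obtain ⟨p, hp⟩ := hgood.1 u w hcuw
  refine ⟨p.toSwitch s0, ?_, ?_⟩
  · intro x hx
    rw [Walk.support_toSwitch] at hx
    exact hp x hx
  · intro e he
    rw [Walk.edges_toSwitch] at he
    obtain ⟨x, y, hxy⟩ := sym2_exists_eq (G.ends e)
    obtain ⟨hx, hy⟩ := Walk.ends_mem_support p e he hxy
    exact hintpos e x y hxy ((hp x hx).trans (hp y hy).symm)

end SGraph

namespace SGraph

variable {m : ℕ} {G : SGraph (Fin m)}

/-- The auxiliary simple graph of a core setup. -/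
def CoreSetup.H (S : CoreSetup G) : SimpleGraph (Fin m) where
  Adj u v := u ≠ v ∧ S.rep u = u ∧ S.rep v = v ∧
    ∃ e x y, G.ends e = s(x, y) ∧ S.c x = S.c u ∧ S.c y = S.c v
  symm := by
    constructor
    rintro u v ⟨h1, h2, h3, e, x, y, he, hx, hy⟩
    exact ⟨h1.symm, h3, h2, e, y, x, by rw [he, Sym2.eq_swap], hy, hx⟩
  loopless := ⟨fun u h => h.1 rfl⟩

lemma CoreSetup.rep_idem (S : CoreSetup G) (v : Fin m) : S.rep (S.rep v) = S.rep v :=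
  S.hrep_eq _ _ (S.hrep_class v)

lemma CoreSetup.c_eq_of_rep_eq (S : CoreSetup G) {u v : Fin m} (h : S.rep u = S.rep v) :
    S.c u = S.c v := by
  rw [← S.hrep_class u, h, S.hrep_class v]

lemma CoreSetup.colorable (S : CoreSetup G) (k : ℕ) (h : S.H.Colorable k) :
    G.ColorableB k := by
  obtain ⟨CH⟩ := h
  refine ⟨fun v => CH (S.rep v), fun i => ?_⟩
  apply balancedSet_of_switch_pos (s := S.s0)
  intro e a b hab ha hb
  have ha' : CH (S.rep a) = i := ha
  have hb' : CH (S.rep b) = i := hb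
  by_cases h : S.c a = S.c b
  · exact S.intpos e a b hab h
  · exfalso
    have hadj : S.H.Adj (S.rep a) (S.rep b) := by
      refine ⟨fun hh => h (S.c_eq_of_rep_eq hh), S.rep_idem a, S.rep_idem b,
        e, a, b, hab, (S.hrep_class a).symm, (S.hrep_class b).symm⟩
    exact CH.valid hadj (ha'.trans hb'.symm)

lemma CoreSetup.minor (S : CoreSetup G) (k : ℕ) (h : S.H.HasCliqueMinor k) :
    (tildeK k).IsMinor G := by
  classical
  obtain ⟨T, hconn, hdisj, hcross⟩ := h
  rcases Nat.lt_or_ge k 2 with hk2 | hk2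
  · -- k ≤ 1 : the edge type of tildeK k is empty
    have hEempty : (tildeK k).E → False := fun e => by
      obtain ⟨i, j, hij⟩ := sym2_exists_eq (e.1 : Sym2 (Fin k))
      have hne : i ≠ j := by
        have hp := e.1.prop
        rw [hij] at hp
        simpa using hp
      exact hne (Fin.ext (by omega))
    rcases Nat.eq_zero_or_pos k with rfl | hk1
    · exact ⟨fun _ => false, fun i => i.elim0, fun i => i.elim0,
        fun i j _ => i.elim0, fun e => (hEempty e).elim,
        fun e1 => (hEempty e1).elim, fun e => (hEempty e).elim⟩
    · have hk : k = 1 := by omega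
      subst hk
      obtain ⟨⟨v0, hv0⟩⟩ := (hconn 0).nonempty
      refine ⟨fun _ => false, fun _ => {v0}, ?_, ?_, fun e => (hEempty e).elim,
        fun e1 => (hEempty e1).elim, fun e => (hEempty e).elim⟩
      · intro _
        refine ⟨⟨v0, rfl⟩, ?_⟩
        intro u hu v hv
        obtain rfl := Set.mem_singleton_iff.mp hu
        obtain rfl := Set.mem_singleton_iff.mp hv
        refine ⟨.nil, ?_, ?_⟩
        · intro x hx
          simp only [Walk.support, List.mem_singleton] at hx
          exact hx ▸ rfl
        · intro e he
          simp [Walk.edges] at he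
      · intro i j hij
        exact absurd (Subsingleton.elim i j) hij
  · -- main case : k ≥ 2
    have hreps : ∀ i, ∀ v ∈ (T i).verts, S.rep v = v := by
      intro i v hv
      by_cases hex : ∃ w ∈ (T i).verts, w ≠ v
      · obtain ⟨w, hw, hwv⟩ := hex
        obtain ⟨W⟩ := (hconn i).preconnected ⟨v, hv⟩ ⟨w, hw⟩
        have hne : (⟨v, hv⟩ : ↥(T i).verts) ≠ ⟨w, hw⟩ := by
          simp only [ne_eq, Subtype.mk.injEq]
          exact fun hh => hwv hh.symm
        have hnil : ¬ W.Nil := SimpleGraph.Walk.not_nil_of_ne hne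
        obtain ⟨x, hadj, q, -⟩ := SimpleGraph.Walk.not_nil_iff.mp hnil
        have hadjT : (T i).Adj v x.val := hadj
        exact ((T i).adj_sub hadjT).2.1
      · push_neg at hex
        have h01 : (⟨0, by omega⟩ : Fin k) ≠ ⟨1, by omega⟩ := by
          intro hh
          simpa using congrArg Fin.val hh
        have hj : ∃ j : Fin k, i ≠ j := by
          by_cases h0 : i = ⟨0, by omega⟩
          · exact ⟨⟨1, by omega⟩, h0 ▸ h01⟩
          · exact ⟨⟨0, by omega⟩, h0⟩
        obtain ⟨j, hij⟩ := hj
        obtain ⟨u, v', hadj, hu, hv'⟩ := hcross i j hij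
        have : u = v := hex u hu
        subst this
        exact hadj.2.1
    set B : Fin k → Set (Fin m) := fun i => {x | ∃ a ∈ (T i).verts, S.c x = S.c a}
      with hB
    have hBdisj : Pairwise fun i j => Disjoint (B i) (B j) := by
      intro i j hij
      rw [Set.disjoint_left]
      rintro x ⟨a, ha, hca⟩ ⟨b, hb, hcb⟩
      have hab : a = b := by
        have h1 : S.rep a = S.rep b := S.hrep_eq a b (hca.symm.trans hcb)
        rw [hreps i a ha, hreps j b hb] at h1
        exact h1
      subst hab
      exact Set.disjoint_left.mp (hdisj hij) ha hb
    have hclassne : ∀ u v, S.H.Adj u v → S.c u ≠ S.c v := by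
      intro u v hadj hc
      have h1 := S.hrep_eq u v hc
      rw [hadj.2.1, hadj.2.2.1] at h1
      exact hadj.1 h1
    have hposedge : ∀ u v, S.H.Adj u v → ∀ σ, ∃ e x y, G.ends e = s(x, y) ∧
        S.c x = S.c u ∧ S.c y = S.c v ∧ (G.switch S.s0).neg e = σ :=
      fun u v hadj => S.bothsigns u v (hclassne u v hadj) hadj.2.2.2
    have hwalkB : ∀ i (A Bv : ↥(T i).verts) (W : SimpleGraph.Walk (T i).coe A Bv),
        ∀ u w : Fin m, S.c u = S.c A.val → S.c w = S.c Bv.val →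
        ∃ p : (G.switch S.s0).Walk u w, (∀ x ∈ p.support, x ∈ B i) ∧
          ∀ e ∈ p.edges, (G.switch S.s0).neg e = false := by
      intro i A Bv W
      induction W with
      | nil =>
        rename_i A'
        intro u w hu hw
        obtain ⟨p, hp1, hp2⟩ := S.conn u w (hu.trans hw.symm)
        exact ⟨p, fun x hx => ⟨A'.val, A'.prop, (hp1 x hx).trans hu⟩, hp2⟩
      | cons hadj W' ih =>
        rename_i A' A₂ Bv'
        intro u w hu hw
        have hadjT : (T i).Adj A'.val A₂.val := hadj
        have hadjH : S.H.Adj A'.val A₂.val := (T i).adj_sub hadjT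
        obtain ⟨e, x, y, he, hx, hy, hsgn⟩ := hposedge A'.val A₂.val hadjH false
        obtain ⟨p1, hp11, hp12⟩ := S.conn u x (hu.trans hx.symm)
        obtain ⟨p2, hp21, hp22⟩ := ih y w hy hw
        refine ⟨p1.append (.cons e he p2), ?_, ?_⟩
        · intro z hz
          rw [Walk.mem_support_append] at hz
          rcases hz with hz | hz
          · exact ⟨A'.val, A'.prop, (hp11 z hz).trans hu⟩
          · simp only [Walk.support, List.mem_cons] at hz
            rcases hz with rfl | hz
            · exact ⟨A'.val, A'.prop, hx⟩
            · exact hp21 z hz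
        · intro f hf
          rw [Walk.edges_append] at hf
          rcases List.mem_append.mp hf with hf | hf
          · exact hp12 f hf
          · simp only [Walk.edges, List.mem_cons] at hf
            rcases List.mem_cons.mp hf with rfl | hf
            · exact hsgn
            · exact hp22 f hf
    have hCROSS : ∀ i j : Fin k, i ≠ j → ∀ σ, ∃ g u v, G.ends g = s(u, v) ∧
        u ∈ B i ∧ v ∈ B j ∧ (G.switch S.s0).neg g = σ := by
      intro i j hij σ
      obtain ⟨u, v, hadj, hu, hv⟩ := hcross i j hij
      obtain ⟨e, x, y, he, hx, hy, hsgn⟩ := hposedge u v hadj σ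
      exact ⟨e, x, y, he, ⟨u, hu, hx⟩, ⟨v, hv, hy⟩, hsgn⟩
    have hspec : ∀ e : (tildeK k).E, ∃ g : G.E, (G.switch S.s0).neg g = e.2 ∧
        ∀ x y : Fin k, (e.1 : Sym2 (Fin k)) = s(x, y) →
          ∃ u v, G.ends g = s(u, v) ∧ u ∈ B x ∧ v ∈ B y := by
      intro e
      obtain ⟨i, j, hij⟩ := sym2_exists_eq (e.1 : Sym2 (Fin k))
      have hne : i ≠ j := by
        have hp := e.1.prop
        rw [hij] at hp
        simpa using hp
      obtain ⟨g, u, v, hg, hu, hv, hsgn⟩ := hCROSS i j hne e.2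
      refine ⟨g, hsgn, ?_⟩
      intro x y hxy
      rcases Sym2.eq_iff.mp (hij.symm.trans hxy) with ⟨rfl, rfl⟩ | ⟨rfl, rfl⟩
      · exact ⟨u, v, hg, hu, hv⟩
      · exact ⟨v, u, by rw [hg, Sym2.eq_swap], hv, hu⟩
    choose η hη1 hη2 using hspec
    refine ⟨S.s0, B, ?_, hBdisj, η, ?_, ?_⟩
    · intro i
      obtain ⟨a0⟩ := (hconn i).nonempty
      refine ⟨⟨a0.val, a0.val, a0.prop, rfl⟩, ?_⟩
      intro u hu v hv
      obtain ⟨a, ha, hca⟩ := hu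
      obtain ⟨b, hb, hcb⟩ := hv
      obtain ⟨W⟩ := (hconn i).preconnected ⟨a, ha⟩ ⟨b, hb⟩
      exact hwalkB i ⟨a, ha⟩ ⟨b, hb⟩ W u v hca hcb
    · intro e1 e2 heq
      obtain ⟨i1, j1, h1⟩ := sym2_exists_eq (e1.1 : Sym2 (Fin k))
      obtain ⟨i2, j2, h2⟩ := sym2_exists_eq (e2.1 : Sym2 (Fin k))
      obtain ⟨u1, v1, hg1, hu1, hv1⟩ := hη2 e1 i1 j1 h1
      obtain ⟨u2, v2, hg2, hu2, hv2⟩ := hη2 e2 i2 j2 h2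
      rw [heq] at hg1
      have hmemB : ∀ (x : Fin m) (i j : Fin k), x ∈ B i → x ∈ B j → i = j := by
        intro x i j hxi hxj
        by_contra hij
        exact Set.disjoint_left.mp (hBdisj hij) hxi hxj
      have hpair : (e1.1 : Sym2 (Fin k)) = (e2.1 : Sym2 (Fin k)) := by
        rcases Sym2.eq_iff.mp (hg1.symm.trans hg2) with ⟨hq1, hq2⟩ | ⟨hq1, hq2⟩
        · have hi : i1 = i2 := hmemB u2 i1 i2 (hq1 ▸ hu1) hu2
          have hj : j1 = j2 := hmemB v2 j1 j2 (hq2 ▸ hv1) hv2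
          rw [h1, h2, hi, hj]
        · have hi : i1 = j2 := hmemB v2 i1 j2 (hq1 ▸ hu1) hv2
          have hj : j1 = i2 := hmemB u2 j1 i2 (hq2 ▸ hv1) hu2
          rw [h1, h2, hi, hj, Sym2.eq_swap]
      have hsnd : e1.2 = e2.2 := by rw [← hη1 e1, heq, hη1 e2]
      exact Prod.ext (Subtype.ext hpair) hsnd
    · intro e x y hxy
      obtain ⟨u, v, hg, hu, hv⟩ := hη2 e x y hxy
      exact ⟨hη1 e, u, v, hg, hu, hv⟩

end SGraph

section TildeS

open SGraph

variable {V : Type} (G : SimpleGraph V)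

lemma tildeS_not_hasNegLoop : ¬ G.tildeS.HasNegLoop := by
  rintro ⟨e, ⟨v, hv⟩, -⟩
  have hv' : (e.1 : Sym2 V) = s(v, v) := hv
  have hp := e.1.prop
  rw [hv'] at hp
  exact G.loopless.irrefl v (G.mem_edgeSet.mp hp)

lemma colorable_of_tildeS_colorableB (k : ℕ) (h : G.tildeS.ColorableB k) :
    G.Colorable k := by
  obtain ⟨c, hc⟩ := h
  refine ⟨SimpleGraph.Coloring.mk c ?_⟩
  intro u v hadj heq
  have he : s(u, v) ∈ G.edgeSet := G.mem_edgeSet.mpr hadj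
  set E1 : G.tildeS.E := (⟨s(u, v), he⟩, true) with hE1
  set E2 : G.tildeS.E := (⟨s(u, v), he⟩, false) with hE2
  have h1 : G.tildeS.ends E1 = s(u, v) := rfl
  have h2 : G.tildeS.ends E2 = s(v, u) := by
    show (s(u, v) : Sym2 V) = s(v, u)
    rw [Sym2.eq_swap]
  set p : G.tildeS.Walk u u := .cons E1 h1 (.cons E2 h2 .nil) with hp
  have hcyc : p.IsCycle := by
    refine ⟨by simp [hp, Walk.edges], ?_, ?_⟩
    · have hne : E1 ≠ E2 := by
        intro hh
        simpa [hE1, hE2] using congrArg Prod.snd hh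
      simp [hp, Walk.edges, hne]
    · have hne : v ≠ u := hadj.ne'
      simp [hp, Walk.support, hne]
  have hsupp : ∀ x ∈ p.support, x ∈ {w | c w = c u} := by
    intro x hx
    simp only [hp, Walk.support, List.mem_cons, List.mem_singleton,
      List.not_mem_nil, or_false] at hx
    rcases hx with rfl | rfl | rfl
    · rfl
    · exact heq.symm
    · rfl
  have hbal := hc (c u) u p hcyc hsupp
  have hneg : p.isNeg = true := rfl
  rw [hneg] at hbal
  exact absurd hbal (by decide)

lemma hasCliqueMinor_of_tildeK_minor (k : ℕ) (h : (tildeK k).IsMinor G.tildeS) :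
    G.HasCliqueMinor k := by
  obtain ⟨s, B, hpos, hdisj, η, hinj, hη⟩ := h
  set T : Fin k → G.Subgraph := fun i =>
    { verts := B i
      Adj := fun u v => G.Adj u v ∧ u ∈ B i ∧ v ∈ B i
      adj_sub := fun h => h.1
      edge_vert := fun h => h.2.1
      symm := by
        constructor
        rintro u v ⟨h1, h2, h3⟩
        exact ⟨h1.symm, h3, h2⟩ } with hT
  have key : ∀ i (u v : V) (p : (G.tildeS.switch s).Walk u v)
      (hs : ∀ x ∈ p.support, x ∈ B i),
      (T i).coe.Reachable ⟨u, hs u p.start_mem_support⟩ ⟨v, hs v p.end_mem_support⟩ := by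
    intro i u v p
    induction p with
    | nil => intro hs; rfl
    | cons e he q ih =>
      rename_i a b c'
      intro hs
      have hb : b ∈ B i := hs b (by
        simp only [Walk.support, List.mem_cons]
        exact Or.inr q.start_mem_support)
      have ha : a ∈ B i := hs a (by simp [Walk.support])
      have hadj : G.Adj a b := by
        have he' : (e.1 : Sym2 V) = s(a, b) := he
        have hp := e.1.prop
        rw [he'] at hp
        exact G.mem_edgeSet.mp hp
      have hcadj : (T i).coe.Adj ⟨a, ha⟩ ⟨b, hb⟩ := ⟨hadj, ha, hb⟩
      have hq : ∀ x ∈ q.support, x ∈ B i := by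
        intro x hx
        exact hs x (by simp only [Walk.support, List.mem_cons]; exact Or.inr hx)
      exact (hcadj.reachable).trans (ih hq)
  refine ⟨T, ?_, hdisj, ?_⟩
  · intro i
    obtain ⟨⟨a, ha⟩, hconn⟩ := hpos i
    haveI : Nonempty ↥(T i).verts := ⟨⟨a, ha⟩⟩
    refine SimpleGraph.Connected.mk ?_
    rintro ⟨u, hu⟩ ⟨v, hv⟩
    obtain ⟨p, hsup, hedge⟩ := hconn u hu v hv
    exact key i u v p hsup
  · intro i j hij
    have hmem : s(i, j) ∈ (⊤ : SimpleGraph (Fin k)).edgeSet := by simpa using hij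
    set e0 : (tildeK k).E := (⟨s(i, j), hmem⟩, false) with he0
    have hee : (tildeK k).ends e0 = s(i, j) := rfl
    obtain ⟨hneg, u, v, hends, hu, hv⟩ := hη e0 i j hee
    have hadj : G.Adj u v := by
      have hends' : ((η e0).1 : Sym2 V) = s(u, v) := hends
      have hp := (η e0).1.prop
      rw [hends'] at hp
      exact G.mem_edgeSet.mp hp
    exact ⟨u, v, hadj, hu, hv⟩

end TildeS

theorem core_reduction (m : ℕ) (G : SGraph (Fin m)) (hnl : ¬ G.HasNegLoop) :
    ∃ H : SimpleGraph (Fin m), (∀ k, H.Colorable k → G.ColorableB k) ∧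
      (∀ k, H.HasCliqueMinor k → (tildeK k).IsMinor G) := by
  obtain ⟨S⟩ := SGraph.exists_coreSetup G hnl
  exact ⟨S.H, S.colorable, S.minor⟩

theorem stmt9' :
    (∀ (f : ℕ → ℕ) (t : ℕ),
      (∀ (m : ℕ) (G : SimpleGraph (Fin m)), ¬ G.HasCliqueMinor t → G.Colorable (f t)) →
      ∀ (m : ℕ) (G : SGraph (Fin m)),
        ¬ G.HasNegLoop → ¬ (tildeK t).IsMinor G → G.ColorableB (f t)) ∧
    (∀ t : ℕ, M t = SM t) := by
  constructor
  · intro f t hf m G hnl hnm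
    obtain ⟨H, hcol, hmin⟩ := core_reduction m G hnl
    apply hcol
    apply hf
    intro hcm
    exact hnm (hmin t hcm)
  · intro t
    unfold M SM
    congr 1
    ext k
    simp only [Set.mem_setOf_eq]
    constructor
    · intro hk m G hnl hchi
      obtain ⟨H, hcol, hmin⟩ := core_reduction m G hnl
      apply hmin
      apply hk m H
      refine le_trans hchi ?_
      show G.chromNumB ≤ H.chromaticNumber
      rw [SimpleGraph.chromaticNumber]
      apply le_iInf₂
      intro n hn
      exact iInf₂_le n (hcol n hn)
    · intro hk m G' hchi
      apply hasCliqueMinor_of_tildeK_minor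
      apply hk m (G'.tildeS) (tildeS_not_hasNegLoop G')
      refine le_trans hchi ?_
      show G'.chromaticNumber ≤ (G'.tildeS).chromNumB
      rw [SimpleGraph.chromaticNumber]
      apply le_iInf₂
      intro n hn
      exact iInf₂_le n (colorable_of_tildeS_colorableB G' n hn)

/-- if every `K_t`-minor-free graph is `f(t)`-colorable, then every
signed graph with no negative loop and no `K̃_t`-minor admits a balanced
`f(t)`-coloring; equivalently, `M(t) = SM(t)` for all `t`. -/
theorem stmt9 :
    (∀ (f : ℕ → ℕ) (t : ℕ),
      (∀ (m : ℕ) (G : SimpleGraph (Fin m)), ¬ G.HasCliqueMinor t → G.Colorable (f t)) →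
      ∀ (m : ℕ) (G : SGraph (Fin m)),
        ¬ G.HasNegLoop → ¬ (tildeK t).IsMinor G → G.ColorableB (f t)) ∧
    (∀ t : ℕ, M t = SM t) := stmt9'
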